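/- Let p and q be natural numbers and let B be a p×q integer matrix. The ℤ-linear map ℤ^q → ℤ^p induced by B is surjective if and only if the gcd of the determinants of all p×p submatrices of B (obtained by keeping all p rows and selecting p of the q columns, in order) is equal to 1. -/

import Mathlib

open Matrix

open Classical in
/-- The `p`-th determinantal divisor `d_p(B)` of a `p × q` integer matrix: the gcd of
the determinants of all `p × p` submatrices of `B` obtained by a strictly monotone
selection of `p` of the `q` columns (the gcd of the empty family being `0`). -/
noncomputable def detDivisorTop (p q : ℕ) (B : Matrix (Fin p) (Fin q) ℤ) : ℤ :=
  (Finset.univ.filter fun g : Fin p → Fin q => StrictMono g).gcd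
    fun g => (B.submatrix id g).det


/-- Cauchy-Binet style expansion. -/
lemma det_mul_expand (p q : ℕ) (M : Matrix (Fin p) (Fin q) ℤ) (N : Matrix (Fin q) (Fin p) ℤ) :
    (M * N).det = ∑ f : Fin p → Fin q, (∏ i, N (f i) i) * (M.submatrix id f).det := by
  rw [det_apply']
  have : ∀ σ : Equiv.Perm (Fin p),
      (∏ i, (M * N) (σ i) i) = ∑ f : Fin p → Fin q, ∏ i, M (σ i) (f i) * N (f i) i := by
    intro σ
    simp only [mul_apply]
    rw [Finset.prod_univ_sum (fun _ => Finset.univ) (fun i k => M (σ i) k * N k i)]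
    simp [Fintype.piFinset_univ]
  simp only [this, Finset.mul_sum]
  rw [Finset.sum_comm]
  refine Finset.sum_congr rfl fun f _ => ?_
  rw [det_apply', Finset.mul_sum]
  refine Finset.sum_congr rfl fun σ _ => ?_
  simp only [submatrix_apply, id_eq, Finset.prod_mul_distrib]
  ring

open Classical in
lemma detDivisorTop_dvd (p q : ℕ) (B : Matrix (Fin p) (Fin q) ℤ) (f : Fin p → Fin q) :
    detDivisorTop p q B ∣ (B.submatrix id f).det := by
  by_cases hf : Function.Injective f
  · set σ := Tuple.sort f with hσ
    have hmono : StrictMono (f ∘ σ) :=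
      (Tuple.monotone_sort f).strictMono_of_injective (hf.comp σ.injective)
    have hmem : (f ∘ σ) ∈ Finset.univ.filter fun g : Fin p → Fin q => StrictMono g := by
      simp [hmono]
    have hdvd : detDivisorTop p q B ∣ (B.submatrix id (f ∘ σ)).det :=
      Finset.gcd_dvd hmem
    have heq : B.submatrix id f = (B.submatrix id (f ∘ σ)).submatrix id ⇑σ⁻¹ := by
      ext a b
      simp [submatrix_apply, Function.comp]
    rw [heq, det_permute']
    exact hdvd.mul_left _
  · rw [Function.not_injective_iff] at hf
    obtain ⟨a, b, hab, hne⟩ := hf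
    rw [det_zero_of_column_eq hne (fun k => by simp [submatrix_apply, hab])]
    exact dvd_zero _

lemma single_smul_mem_range (p q : ℕ) (B : Matrix (Fin p) (Fin q) ℤ)
    (g : Fin p → Fin q) (hg : Function.Injective g) (i : Fin p) :
    ∃ v : Fin q → ℤ, B.mulVec v = (B.submatrix id g).det • Pi.single i 1 := by
  classical
  set A := B.submatrix id g with hA
  refine ⟨fun k => ∑ j, if g j = k then adjugate A j i else 0, ?_⟩
  funext r
  have h1 : B.mulVec (fun k => ∑ j, if g j = k then adjugate A j i else 0) r
      = ∑ j, A r j * adjugate A j i := by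
    simp only [mulVec, dotProduct, Finset.mul_sum]
    rw [Finset.sum_comm]
    refine Finset.sum_congr rfl fun j _ => ?_
    simp only [mul_ite, mul_zero]
    rw [Finset.sum_ite_eq Finset.univ (g j) (fun k => B r k * adjugate A j i)]
    simp [hA, submatrix_apply]
  have h2 : (∑ j, A r j * adjugate A j i) = (A * adjugate A) r i := (mul_apply).symm
  rw [h1, h2, mul_adjugate]
  simp [Pi.single_apply, Matrix.one_apply, eq_comm]

/-- Proposition of Section 5: the linear map `ℤ^q → ℤ^p` induced by `B` is surjective
iff the gcd of all `p × p` minors of `B` equals `1`. -/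
theorem surjective_iff_detDivisorTop_eq_one (p q : ℕ) (B : Matrix (Fin p) (Fin q) ℤ) :
    Function.Surjective B.mulVecLin ↔ detDivisorTop p q B = 1 := by
  classical
  constructor
  · intro h
    choose C hC using fun i => h (Pi.single i 1)
    set Cm : Matrix (Fin q) (Fin p) ℤ := fun k i => C i k with hCm
    have hBC : B * Cm = 1 := by
      ext r i
      have := congrFun (hC i) r
      rw [mul_apply]
      simpa [hCm, mulVecLin_apply, mulVec, dotProduct, mul_apply, Matrix.one_apply,
        Pi.single_apply, eq_comm] using this
    have h1 : detDivisorTop p q B ∣ 1 := by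
      have hdet : (1 : ℤ) = (B * Cm).det := by rw [hBC, det_one]
      rw [hdet, det_mul_expand]
      exact Finset.dvd_sum fun f _ => (detDivisorTop_dvd p q B f).mul_left _
    have hn : normalize (detDivisorTop p q B) = detDivisorTop p q B := Finset.normalize_gcd
    rw [← hn]
    exact normalize_eq_one.mpr (isUnit_of_dvd_one h1)
  · intro hd
    have hsingle : ∀ i : Fin p, Pi.single i (1 : ℤ) ∈ LinearMap.range B.mulVecLin := by
      intro i
      set I : Ideal ℤ := Submodule.comap
        (LinearMap.toSpanSingleton ℤ (Fin p → ℤ) (Pi.single i 1))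
        (LinearMap.range B.mulVecLin) with hI
      have hmem : ∀ g ∈ Finset.univ.filter (fun g : Fin p → Fin q => StrictMono g),
          (B.submatrix id g).det ∈ I := by
        intro g hgm
        obtain ⟨v, hv⟩ := single_smul_mem_range p q B g
          ((Finset.mem_filter.mp hgm).2.injective) i
        refine Submodule.mem_comap.mpr ⟨v, ?_⟩
        rw [mulVecLin_apply, hv]
        rfl
      have hdvd : Submodule.IsPrincipal.generator I ∣ detDivisorTop p q B :=
        Finset.dvd_gcd fun g hg =>
          (Submodule.IsPrincipal.mem_iff_generator_dvd I).mp (hmem g hg)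
      rw [hd] at hdvd
      have htop : I = ⊤ := Ideal.eq_top_of_isUnit_mem I
        (Submodule.IsPrincipal.generator_mem I) (isUnit_of_dvd_one hdvd)
      have h1I : (1 : ℤ) ∈ I := htop ▸ Submodule.mem_top
      have := Submodule.mem_comap.mp h1I
      simpa using this
    rw [← LinearMap.range_eq_top, eq_top_iff]
    intro w _
    rw [pi_eq_sum_univ w]
    refine Submodule.sum_mem _ fun i _ => Submodule.smul_mem _ _ ?_
    have : (fun j => if i = j then (1 : ℤ) else 0) = Pi.single i 1 := by
      funext j; simp [Pi.single_apply, eq_comm]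
    rw [this]
    exact hsingle i
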